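/- arXiv:2411.19846 — 5 statements merged into one kernel-verified Lean document; each statement's English description precedes it below -/
import Mathlib

section
/- Let (W, A, T, μ) be a twisted group algebra datum over ℂ with W a finite abelian group, and assume ZW = {1}, i.e. the only w ∈ W with T w * T v = T v * T w for all v ∈ W is the identity. Then there exists a natural number d with d² = |W| such that A is isomorphic as a ℂ-algebra to the algebra of d × d matrices over ℂ. -/
/-- A twisted group algebra datum `(W, A, T, μ)` over `ℂ`: a group `W`, an associative unital
`ℂ`-algebra `A`, a map `T` from `W` to the units of `A` whose values form a `ℂ`-basis of `A`,
and a map `μ : W × W → ℂˣ` with `T w * T v = μ(w,v) • T (w * v)` for all `w, v`. -/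
structure TwistedGroupAlgebraDatum (W : Type*) [Group W] (A : Type*) [Ring A]
    [Algebra ℂ A] where
  /-- The distinguished family of units. -/
  T : W → Aˣ
  /-- The twisting 2-cocycle. -/
  μ : W → W → ℂˣ
  linearIndependent_T : LinearIndependent ℂ fun w : W => (T w : A)
  span_T : Submodule.span ℂ (Set.range fun w : W => (T w : A)) = ⊤
  T_mul : ∀ w v : W, (T w : A) * (T v : A) = (μ w v : ℂ) • (T (w * v) : A)

/-- The set `ZW = {w ∈ W : T w * T v = T v * T w for all v ∈ W}`. -/
def TwistedGroupAlgebraDatum.ZW {W : Type*} [Group W] {A : Type*} [Ring A] [Algebra ℂ A]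
    (D : TwistedGroupAlgebraDatum W A) : Set W :=
  {w : W | ∀ v : W, (D.T w : A) * (D.T v : A) = (D.T v : A) * (D.T w : A)}

set_option linter.unusedSectionVars false


open Module

namespace TwistedGroupAlgebraDatum

variable {W : Type*} [CommGroup W] {A : Type*} [Ring A] [Algebra ℂ A]
variable (D : TwistedGroupAlgebraDatum W A)

noncomputable def basis : Basis W ℂ A := Basis.mk D.linearIndependent_T (by rw [D.span_T])

@[simp] lemma basis_apply (w : W) : D.basis w = (D.T w : A) := Basis.mk_apply _ _ _

lemma nontrivialA (D : TwistedGroupAlgebraDatum W A) : Nontrivial A :=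
  nontrivial_of_ne (D.basis 1) 0 (D.basis.ne_zero 1)

lemma noZero (_D : TwistedGroupAlgebraDatum W A) : NoZeroSMulDivisors ℂ A := by
  constructor
  intro c x h
  rcases eq_or_ne c 0 with hc | hc
  · exact Or.inl hc
  · refine Or.inr ?_
    have := congrArg (fun y => c⁻¹ • y) h
    simpa [smul_smul, inv_mul_cancel₀ hc] using this

lemma T_ne_zero (w : W) : (D.T w : A) ≠ 0 := by
  have := D.basis.ne_zero w
  simpa using this

lemma smul_T_cancel {c d : ℂ} {w : W} (h : c • (D.T w : A) = d • (D.T w : A)) : c = d := by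
  haveI := D.noZero
  exact smul_left_injective ℂ (D.T_ne_zero w) h

lemma T_one : (D.T 1 : A) = (D.μ 1 1 : ℂ) • 1 := by
  have h := D.T_mul 1 1
  rw [one_mul] at h
  -- T1 * T1 = μ11 • T1 ; multiply on right by (T 1)⁻¹
  have := congrArg (fun x : A => x * (((D.T 1)⁻¹ : Aˣ) : A)) h
  simpa [mul_assoc, smul_mul_assoc] using this

lemma one_eq : (1 : A) = ((D.μ 1 1 : ℂ))⁻¹ • (D.T 1 : A) := by
  rw [D.T_one, smul_smul, inv_mul_cancel₀ (Units.ne_zero (D.μ 1 1)), one_smul]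

lemma μ_one_right (w : W) : D.μ w 1 = D.μ 1 1 := by
  have h := D.T_mul w 1
  rw [mul_one] at h
  have : ((D.μ w 1 : ℂ)) • (D.T w : A) = ((D.μ 1 1 : ℂ)) • (D.T w : A)  := by
    calc ((D.μ w 1 : ℂ)) • (D.T w : A) = (D.T w : A) * (D.T 1 : A) := h.symm
    _ = (D.T w : A) * ((D.μ 1 1 : ℂ) • 1) := by rw [D.T_one]
    _ = ((D.μ 1 1 : ℂ)) • (D.T w : A) := by rw [mul_smul_comm, mul_one]
  exact Units.ext (D.smul_T_cancel this)

lemma μ_one_left (w : W) : D.μ 1 w = D.μ 1 1 := by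
  have h := D.T_mul 1 w
  rw [one_mul] at h
  have : ((D.μ 1 w : ℂ)) • (D.T w : A) = ((D.μ 1 1 : ℂ)) • (D.T w : A)  := by
    calc ((D.μ 1 w : ℂ)) • (D.T w : A) = (D.T 1 : A) * (D.T w : A) := h.symm
    _ = ((D.μ 1 1 : ℂ) • 1) * (D.T w : A) := by rw [D.T_one]
    _ = ((D.μ 1 1 : ℂ)) • (D.T w : A) := by rw [smul_mul_assoc, one_mul]
  exact Units.ext (D.smul_T_cancel this)

/-- The cocycle identity. -/
lemma cocycle (u v w : W) : D.μ u v * D.μ (u * v) w = D.μ v w * D.μ u (v * w) := by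
  have h1 : ((D.T u : A) * D.T v) * D.T w
      = ((D.μ u v : ℂ) * (D.μ (u*v) w : ℂ)) • (D.T (u*v*w) : A) := by
    rw [D.T_mul u v, smul_mul_assoc, D.T_mul (u*v) w, smul_smul]
  have h2 : (D.T u : A) * ((D.T v : A) * D.T w)
      = ((D.μ v w : ℂ) * (D.μ u (v*w) : ℂ)) • (D.T (u*(v*w)) : A) := by
    rw [D.T_mul v w, mul_smul_comm, D.T_mul u (v*w), smul_smul]
  have h3 : ((D.μ u v : ℂ) * (D.μ (u*v) w : ℂ)) • (D.T (u*v*w) : A)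
      = ((D.μ v w : ℂ) * (D.μ u (v*w) : ℂ)) • (D.T (u*v*w) : A) := by
    calc ((D.μ u v : ℂ) * (D.μ (u*v) w : ℂ)) • (D.T (u*v*w) : A)
        = (D.T u : A) * D.T v * D.T w := h1.symm
      _ = (D.T u : A) * ((D.T v : A) * D.T w) := mul_assoc _ _ _
      _ = ((D.μ v w : ℂ) * (D.μ u (v*w) : ℂ)) • (D.T (u*(v*w)) : A) := h2
      _ = ((D.μ v w : ℂ) * (D.μ u (v*w) : ℂ)) • (D.T (u*v*w) : A) := by rw [mul_assoc]
  have h4 : (D.μ u v : ℂ) * (D.μ (u*v) w : ℂ) = (D.μ v w : ℂ) * (D.μ u (v*w) : ℂ) :=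
    D.smul_T_cancel h3
  exact Units.ext (by push_cast; exact h4)



/-- The commutation bicharacter. -/
def gamma (w v : W) : ℂˣ := D.μ v w * (D.μ w v)⁻¹

lemma gamma_coe (w v : W) : (D.gamma w v : ℂ) = (D.μ v w : ℂ) * (D.μ w v : ℂ)⁻¹ := by
  simp [gamma]

lemma T_comm (w v : W) : (D.T v : A) * D.T w = (D.gamma w v : ℂ) • ((D.T w : A) * D.T v) := by
  rw [D.T_mul, D.T_mul, smul_smul, mul_comm w v]
  congr 1
  rw [gamma_coe]
  field_simp

lemma conj_T (w v : W) :
    (D.T v : A) * D.T w * ↑(D.T v)⁻¹ = (D.gamma w v : ℂ) • (D.T w : A) := by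
  rw [D.T_comm, smul_mul_assoc, mul_assoc]
  simp

lemma gamma_swap (w v : W) : D.gamma w v = (D.gamma v w)⁻¹ := by
  simp [gamma, mul_comm]

lemma gamma_self (w : W) : D.gamma w w = 1 := by simp [gamma]

lemma gamma_mul_right (w u v : W) : D.gamma w (u * v) = D.gamma w u * D.gamma w v := by
  have ha := congrArg (Units.val) (D.cocycle u v w)
  have hb := congrArg (Units.val) (D.cocycle u w v)
  have hc := congrArg (Units.val) (D.cocycle w u v)
  rw [mul_comm w v] at hb
  rw [mul_comm w u] at hc
  push_cast at ha hb hc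
  set a := (D.μ u v : ℂ)
  set b := (D.μ (u*v) w : ℂ)
  set c := (D.μ v w : ℂ)
  set d := (D.μ u (v*w) : ℂ)
  set e := (D.μ u w : ℂ)
  set f := (D.μ (u*w) v : ℂ)
  set g := (D.μ w v : ℂ)
  set h := (D.μ w u : ℂ)
  set i := (D.μ w (u*v) : ℂ)
  have hkey : (a*f) * (b*h*g) = (a*f) * (c*e*i) := by
    linear_combination (h*g*f) * ha - (c*f*h) * hb + (c*f*e) * hc
  have haf : a * f ≠ 0 := mul_ne_zero (Units.ne_zero _) (Units.ne_zero _)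
  have key2 : b*h*g = c*e*i := mul_left_cancel₀ haf hkey
  apply Units.ext
  push_cast [gamma_coe]
  have hg : g ≠ 0 := Units.ne_zero _
  have hh : h ≠ 0 := Units.ne_zero _
  have hi : i ≠ 0 := Units.ne_zero _
  field_simp
  linear_combination key2

/-- The character `v ↦ γ(w, v)`. -/
def chi (w : W) : W →* ℂˣ := MonoidHom.mk' (fun v => D.gamma w v) (D.gamma_mul_right w)

lemma gamma_mul_left (a b v : W) : D.gamma (a * b) v = D.gamma a v * D.gamma b v := by
  rw [D.gamma_swap (a*b) v, D.gamma_mul_right v a b, mul_inv, ← D.gamma_swap a v,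
    ← D.gamma_swap b v]

lemma gamma_one_right (w : W) : D.gamma w 1 = 1 := (D.chi w).map_one

lemma gamma_one_left (v : W) : D.gamma 1 v = 1 := by
  rw [D.gamma_swap, D.gamma_one_right, inv_one]

lemma mem_ZW_iff (w : W) : w ∈ D.ZW ↔ ∀ v, D.gamma w v = 1 := by
  unfold ZW
  simp only [Set.mem_setOf_eq]
  constructor
  · intro h v
    have := h v
    rw [D.T_mul, D.T_mul, mul_comm w v] at this
    have h2 := D.smul_T_cancel this
    simp only [gamma]
    rw [show D.μ v w = D.μ w v from Units.ext h2.symm]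
    simp
  · intro h v
    have h2 := D.T_comm w v
    rw [h v] at h2
    simpa using h2.symm

lemma gamma_faithful (hZ : D.ZW = {1}) {w : W} (h : ∀ v, D.gamma w v = 1) : w = 1 := by
  have : w ∈ D.ZW := (D.mem_ZW_iff w).mpr h
  rw [hZ] at this
  exact this



lemma sum_char_eq_zero {G : Type*} [Group G] [Fintype G] (χ : G →* ℂˣ) (h : ∃ g, χ g ≠ 1) :
    ∑ g : G, (χ g : ℂ) = 0 := by
  obtain ⟨g₀, hg₀⟩ := h
  have h1 : ∑ g : G, (χ g : ℂ) = ∑ g : G, (χ (g₀ * g) : ℂ) :=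
    Fintype.sum_equiv (Equiv.mulLeft g₀⁻¹) _ _ (fun g => by simp)
  have h2 : ∑ g : G, (χ (g₀ * g) : ℂ) = (χ g₀ : ℂ) * ∑ g : G, (χ g : ℂ) := by
    rw [Finset.mul_sum]
    refine Finset.sum_congr rfl fun g _ => ?_
    push_cast [map_mul]
    ring
  have h3 : ((χ g₀ : ℂ) - 1) * ∑ g : G, (χ g : ℂ) = 0 := by
    rw [sub_mul, one_mul, ← h2, ← h1, sub_self]
  rcases mul_eq_zero.mp h3 with h4 | h4
  · exact absurd (Units.ext (by simpa using sub_eq_zero.mp h4)) hg₀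
  · exact h4

variable [Fintype W]

open scoped Classical

/-- The averaging operator `x ↦ ∑ v, T v * x * (T v)⁻¹`. -/
def avgL : A →ₗ[ℂ] A :=
  ∑ v : W, (LinearMap.mulLeft ℂ ((D.T v : A))).comp (LinearMap.mulRight ℂ ((↑(D.T v)⁻¹ : A)))

lemma avgL_apply (x : A) : D.avgL x = ∑ v : W, (D.T v : A) * x * (↑(D.T v)⁻¹ : A) := by
  simp [avgL, mul_assoc]

lemma avgL_T (hZ : D.ZW = {1}) (w : W) :
    D.avgL (D.T w : A) = (if w = 1 then (Fintype.card W : ℂ) else 0) • (D.T w : A) := by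
  classical
  rw [D.avgL_apply]
  have h1 : ∀ v : W, (D.T v : A) * (D.T w : A) * (↑(D.T v)⁻¹ : A)
      = (D.gamma w v : ℂ) • (D.T w : A) := fun v => D.conj_T w v
  rw [Finset.sum_congr rfl (fun v _ => h1 v), ← Finset.sum_smul]
  by_cases hw : w = 1
  · subst hw
    simp [gamma_one_left]
  · have h0 : ∑ v : W, (D.gamma w v : ℂ) = 0 := by
      refine sum_char_eq_zero (D.chi w) ?_
      by_contra hc
      push_neg at hc
      exact hw (D.gamma_faithful hZ (fun v => hc v))
    rw [h0]
    simp [hw]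

lemma avgL_eq (hZ : D.ZW = {1}) (x : A) :
    D.avgL x = ((Fintype.card W : ℂ) * (D.basis.repr x 1)) • (D.T 1 : A) := by
  classical
  conv_lhs => rw [← D.basis.sum_repr x]
  rw [map_sum]
  have h1 : ∀ w : W, D.avgL (D.basis.repr x w • D.basis w)
      = D.basis.repr x w • ((if w = 1 then (Fintype.card W : ℂ) else 0) • (D.T w : A)) := by
    intro w
    rw [map_smul, basis_apply, D.avgL_T hZ]
  rw [Finset.sum_congr rfl (fun w _ => h1 w), Finset.sum_eq_single 1]
  · simp [smul_smul, mul_comm]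
  · intro b _ hb
    simp [hb]
  · simp

/-- The inverse of `T u` explicitly. -/
lemma inv_T (u : W) : ((↑(D.T u)⁻¹ : A))
    = ((D.μ u u⁻¹ : ℂ) * (D.μ 1 1 : ℂ))⁻¹ • (D.T u⁻¹ : A) := by
  have h : (D.T u : A) * (((D.μ u u⁻¹ : ℂ) * (D.μ 1 1 : ℂ))⁻¹ • (D.T u⁻¹ : A)) = 1 := by
    rw [mul_smul_comm, D.T_mul, mul_inv_cancel, D.T_one, smul_smul, smul_smul, mul_assoc,
      inv_mul_cancel₀ (mul_ne_zero (Units.ne_zero (D.μ u u⁻¹)) (Units.ne_zero (D.μ 1 1))),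
      one_smul]
  exact ((Units.mul_right_inj (D.T u)).mp (by rw [h, Units.mul_inv])).symm

lemma T_mul_inv_T (w u : W) : (D.T w : A) * (↑(D.T u)⁻¹ : A)
    = (((D.μ u u⁻¹ : ℂ) * (D.μ 1 1 : ℂ))⁻¹ * (D.μ w u⁻¹ : ℂ)) • (D.T (w * u⁻¹) : A) := by
  rw [D.inv_T, mul_smul_comm, D.T_mul, smul_smul]

lemma repr_T (w u : W) :
    D.basis.repr (D.T w : A) u = if w = u then 1 else 0 := by
  classical
  have h : (D.T w : A) = D.basis w := (D.basis_apply w).symm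
  rw [h, D.basis.repr_self, Finsupp.single_apply]

lemma repr_mul_inv_T (x : A) (u : W) :
    D.basis.repr (x * (↑(D.T u)⁻¹ : A)) 1 = (D.μ 1 1 : ℂ)⁻¹ * D.basis.repr x u := by
  classical
  conv_lhs => rw [← D.basis.sum_repr x, Finset.sum_mul]
  have h1 : ∀ w : W, (D.basis.repr x w • D.basis w) * (↑(D.T u)⁻¹ : A)
      = (D.basis.repr x w * (((D.μ u u⁻¹ : ℂ) * (D.μ 1 1 : ℂ))⁻¹ * (D.μ w u⁻¹ : ℂ)))
        • (D.T (w * u⁻¹) : A) := by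
    intro w
    rw [basis_apply, smul_mul_assoc, D.T_mul_inv_T, smul_smul]
  rw [Finset.sum_congr rfl (fun w _ => h1 w), map_sum]
  rw [Finsupp.finset_sum_apply]
  rw [Finset.sum_eq_single u]
  · rw [map_smul, Finsupp.smul_apply, D.repr_T, if_pos (mul_inv_cancel u)]
    rw [smul_eq_mul, mul_one]
    field_simp
  · intro b _ hb
    rw [map_smul, Finsupp.smul_apply, D.repr_T, if_neg, smul_zero]
    intro hcon
    exact hb (by rwa [mul_inv_eq_one] at hcon)
  · intro h
    exact absurd (Finset.mem_univ u) h

/-- Simplicity: any `ℂ`-algebra map out of `A` to a nontrivial algebra is injective. -/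
lemma algHom_injective (hZ : D.ZW = {1}) {E : Type*} [Ring E] [Algebra ℂ E] [Nontrivial E]
    (ρ : A →ₐ[ℂ] E) : Function.Injective ρ := by
  rw [injective_iff_map_eq_zero]
  intro x hx
  by_contra hx0
  obtain ⟨u, hu⟩ : ∃ u, D.basis.repr x u ≠ 0 := by
    by_contra h
    push_neg at h
    apply hx0
    rw [← D.basis.sum_repr x]
    simp only [h, zero_smul, Finset.sum_const_zero]
  set z := x * (↑(D.T u)⁻¹ : A) with hzdef
  have hz1 : D.basis.repr z 1 ≠ 0 := by
    rw [hzdef, D.repr_mul_inv_T]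
    exact mul_ne_zero (inv_ne_zero (Units.ne_zero _)) hu
  have havg : D.avgL z = ((Fintype.card W : ℂ) * D.basis.repr z 1) • (D.T 1 : A) :=
    D.avgL_eq hZ z
  have hρz : ρ z = 0 := by rw [hzdef, map_mul, hx, zero_mul]
  have hρavg : ρ (D.avgL z) = 0 := by
    rw [D.avgL_apply, map_sum]
    refine Finset.sum_eq_zero fun v _ => ?_
    rw [map_mul, map_mul, hρz, mul_zero, zero_mul]
  have havg1 : D.avgL z
      = (((Fintype.card W : ℂ) * D.basis.repr z 1) * (D.μ 1 1 : ℂ)) • (1 : A) := by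
    rw [havg, D.T_one, smul_smul]
  have h0 : (((Fintype.card W : ℂ) * D.basis.repr z 1) * (D.μ 1 1 : ℂ)) • (1 : E) = 0 := by
    rw [← map_one ρ, ← map_smul, ← havg1, hρavg]
  have hc : ((Fintype.card W : ℂ) * D.basis.repr z 1) * (D.μ 1 1 : ℂ) ≠ 0 := by
    refine mul_ne_zero (mul_ne_zero ?_ hz1) (Units.ne_zero _)
    exact_mod_cast Nat.cast_ne_zero.mpr (Fintype.card_ne_zero (α := W))
  rcases smul_eq_zero.mp h0 with h | h
  · exact hc h
  · exact one_ne_zero h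



lemma gamma_zpow_right (u x : W) (k : ℤ) : D.gamma u (x ^ k) = (D.gamma u x) ^ k :=
  map_zpow (D.chi u) x k

lemma gamma_zpow_left (x u : W) (k : ℤ) : D.gamma (x ^ k) u = (D.gamma x u) ^ k := by
  rw [D.gamma_swap (x ^ k) u, D.gamma_zpow_right u x k, ← inv_zpow, ← D.gamma_swap]

/-- Existence of a Lagrangian (maximal isotropic = its own perp) subgroup. -/
lemma exists_lagrangian :
    ∃ L : Subgroup W, (∀ a ∈ L, ∀ b ∈ L, D.gamma a b = 1) ∧
      (∀ x : W, (∀ l ∈ L, D.gamma l x = 1) → x ∈ L) := by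
  classical
  set S : Set (Subgroup W) := {L | ∀ a ∈ L, ∀ b ∈ L, D.gamma a b = 1} with hS
  have hfin : S.Finite := Set.toFinite S
  have hne : S.Nonempty := by
    refine ⟨⊥, ?_⟩
    intro a ha b hb
    rw [Subgroup.mem_bot] at ha hb
    subst ha; subst hb
    exact D.gamma_one_left 1
  obtain ⟨L, hL, hmax⟩ := Set.Finite.exists_maximalFor id S hfin hne
  refine ⟨L, hL, ?_⟩
  intro x hx
  have hx2 : ∀ l ∈ L, D.gamma x l = 1 := fun l hl => by
    rw [D.gamma_swap, hx l hl, inv_one]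
  have hiso : (L ⊔ Subgroup.zpowers x) ∈ S := by
    intro a ha b hb
    rw [Subgroup.mem_sup] at ha hb
    obtain ⟨la, hla, za, hza, rfl⟩ := ha
    obtain ⟨lb, hlb, zb, hzb, rfl⟩ := hb
    obtain ⟨ka, rfl⟩ := Subgroup.mem_zpowers_iff.mp hza
    obtain ⟨kb, rfl⟩ := Subgroup.mem_zpowers_iff.mp hzb
    rw [D.gamma_mul_left, D.gamma_mul_right, D.gamma_mul_right, D.gamma_zpow_left,
      D.gamma_zpow_left, D.gamma_zpow_right, D.gamma_zpow_right]
    rw [hL la hla lb hlb, hx la hla, hx2 lb hlb, D.gamma_self x]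
    simp
  have heq : L = L ⊔ Subgroup.zpowers x := le_antisymm le_sup_left (hmax hiso le_sup_left)
  rw [heq]
  exact Subgroup.mem_sup_right (Subgroup.mem_zpowers x)

lemma card_quotient_mul_self_le (L : Subgroup W)
    (hiso : ∀ a ∈ L, ∀ b ∈ L, D.gamma a b = 1)
    (hmax : ∀ x : W, (∀ l ∈ L, D.gamma l x = 1) → x ∈ L) :
    Nat.card (W ⧸ L) * Nat.card (W ⧸ L) ≤ Fintype.card W := by
  classical
  let inner : W → (↥L →* ℂˣ) := fun w =>
    MonoidHom.mk' (fun l => D.gamma (l : W) w) (fun a b => D.gamma_mul_left a b w)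
  let Φ : W →* (↥L →* ℂˣ) :=
    MonoidHom.mk' inner (fun u v => MonoidHom.ext fun l => D.gamma_mul_right (l : W) u v)
  have hker : Φ.ker = L := by
    ext w
    simp only [MonoidHom.mem_ker]
    constructor
    · intro h
      refine hmax w fun l hl => ?_
      exact DFunLike.congr_fun h (⟨l, hl⟩ : ↥L)
    · intro hw
      exact MonoidHom.ext fun l => hiso (l : W) l.2 w hw
  obtain ⟨e⟩ := CommGroup.monoidHom_mulEquiv_of_hasEnoughRootsOfUnity ↥L ℂ
  haveI : Finite (↥L →* ℂˣ) := Finite.of_equiv ↥L e.toEquiv.symm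
  have le1 : Nat.card (W ⧸ L) ≤ Nat.card (↥L →* ℂˣ) := by
    have h2 : Nat.card (W ⧸ L) = Nat.card (W ⧸ Φ.ker) := by rw [hker]
    rw [h2]
    exact Nat.card_le_card_of_injective _ (QuotientGroup.kerLift_injective Φ)
  have hcard : Nat.card (↥L →* ℂˣ) = Nat.card ↥L := Nat.card_congr e.toEquiv
  have hprod : Nat.card W = Nat.card (W ⧸ L) * Nat.card ↥L :=
    Subgroup.card_eq_card_quotient_mul_card_subgroup L
  rw [← Nat.card_eq_fintype_card, hprod]
  exact Nat.mul_le_mul_left _ (le1.trans hcard.le)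



/-- Existence of a multiplicative trivialization of `μ` on an isotropic subgroup. -/
lemma exists_lam (L : Subgroup W) (hiso : ∀ a ∈ L, ∀ b ∈ L, D.gamma a b = 1) :
    ∃ lam : ↥L → ℂ, (∀ l, lam l ≠ 0) ∧ (lam 1 = (D.μ 1 1 : ℂ)) ∧
      (∀ a b : ↥L, lam a * lam b = (D.μ (a : W) (b : W) : ℂ) * lam (a * b)) := by
  classical
  haveI := D.nontrivialA
  haveI : FiniteDimensional ℂ A := Module.Finite.of_basis D.basis
  set TS : Set A := (fun w : W => (D.T w : A)) '' (L : Set W) with hTS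
  set p : Submodule ℂ A := Submodule.span ℂ TS with hp
  have h1mem : (1 : A) ∈ p := by
    rw [D.one_eq]
    exact p.smul_mem _ (Submodule.subset_span ⟨1, L.one_mem, rfl⟩)
  have hmul : ∀ x y : A, x ∈ p → y ∈ p → x * y ∈ p := by
    intro x y hx hy
    have hle : p * p ≤ p := by
      rw [hp, Submodule.span_mul_span]
      refine Submodule.span_le.mpr ?_
      rintro _ ⟨_, ⟨a, ha, rfl⟩, _, ⟨b, hb, rfl⟩, rfl⟩
      show ((D.T a : A) * (D.T b : A)) ∈ Submodule.span ℂ TS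
      rw [D.T_mul]
      exact p.smul_mem _ (Submodule.subset_span ⟨a * b, L.mul_mem ha hb, rfl⟩)
    exact hle (Submodule.mul_mem_mul hx hy)
  set B : Subalgebra ℂ A := p.toSubalgebra h1mem hmul with hB
  have hTmem : ∀ l : ↥L, (D.T (l : W) : A) ∈ B :=
    fun l => Submodule.subset_span ⟨(l : W), l.2, rfl⟩
  -- commutativity
  have hcomm : ∀ x ∈ p, ∀ y ∈ p, x * y = y * x := by
    intro x hx y hy
    induction hx using Submodule.span_induction with
    | mem a ha =>
      obtain ⟨wa, hwa, rfl⟩ := ha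
      induction hy using Submodule.span_induction with
      | mem b hb =>
        obtain ⟨wb, hwb, rfl⟩ := hb
        have := D.T_comm wb wa
        rw [hiso wb hwb wa hwa] at this
        simpa using this
      | zero => simp
      | add y z _ _ hy' hz' => rw [mul_add, add_mul, hy', hz']
      | smul c y _ hy' => rw [mul_smul_comm, smul_mul_assoc, hy']
    | zero => simp
    | add x z _ _ hx' hz' => rw [mul_add, add_mul, hx', hz']
    | smul c xx _ hx' => rw [mul_smul_comm, smul_mul_assoc, hx']
  letI : CommRing ↥B :=
    { (inferInstance : Ring ↥B) with
      mul_comm := fun x y => Subtype.ext (hcomm (x : A) x.2 (y : A) y.2) }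
  haveI : Nontrivial ↥B := ⟨⟨1, 0, fun h => one_ne_zero (congrArg Subtype.val h)⟩⟩
  obtain ⟨m, hm⟩ := Ideal.exists_maximal ↥B
  haveI := hm
  letI : Field (↥B ⧸ m) := Ideal.Quotient.field m
  haveI : FiniteDimensional ℂ ↥B := by
    have : FiniteDimensional ℂ ↥p := FiniteDimensional.finiteDimensional_submodule p
    exact this
  haveI : FiniteDimensional ℂ (↥B ⧸ m) :=
    Module.Finite.of_surjective (Ideal.Quotient.mkₐ ℂ m).toLinearMap
      (Ideal.Quotient.mkₐ_surjective ℂ m)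
  haveI : Algebra.IsAlgebraic ℂ (↥B ⧸ m) := Algebra.IsAlgebraic.of_finite ℂ _
  have hsurj : Function.Surjective (algebraMap ℂ (↥B ⧸ m)) :=
    (IsAlgClosed.algebraMap_bijective_of_isIntegral (k := ℂ)).2
  have hinj : Function.Injective (algebraMap ℂ (↥B ⧸ m)) :=
    (algebraMap ℂ (↥B ⧸ m)).injective
  let e : ℂ ≃ₐ[ℂ] (↥B ⧸ m) := AlgEquiv.ofBijective (Algebra.ofId ℂ _) ⟨hinj, hsurj⟩
  let χ : ↥B →ₐ[ℂ] ℂ := e.symm.toAlgHom.comp (Ideal.Quotient.mkₐ ℂ m)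
  set lam : ↥L → ℂ := fun l => χ ⟨(D.T (l : W) : A), hTmem l⟩ with hlam
  have hmul' : ∀ a b : ↥L, lam a * lam b = (D.μ (a : W) (b : W) : ℂ) * lam (a * b) := by
    intro a b
    have h1 : (⟨(D.T (a : W) : A), hTmem a⟩ : ↥B) * ⟨(D.T (b : W) : A), hTmem b⟩
        = (D.μ (a : W) (b : W) : ℂ) • ⟨(D.T ((a * b : ↥L) : W) : A), hTmem (a * b)⟩ := by
      ext
      push_cast
      rw [D.T_mul]
    rw [hlam]
    simp only
    rw [← map_mul, h1, map_smul, smul_eq_mul]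
  have hone : lam 1 = (D.μ 1 1 : ℂ) := by
    have h1 : (⟨(D.T ((1 : ↥L) : W) : A), hTmem 1⟩ : ↥B) = (D.μ 1 1 : ℂ) • (1 : ↥B) := by
      ext
      push_cast
      rw [D.T_one]
    rw [hlam]
    simp only
    rw [h1, map_smul, map_one, smul_eq_mul, mul_one]
  refine ⟨lam, ?_, hone, hmul'⟩
  intro l
  have h2 := hmul' l l⁻¹
  rw [mul_inv_cancel, hone] at h2
  intro hzero
  rw [hzero, zero_mul] at h2
  exact mul_ne_zero (Units.ne_zero _) (Units.ne_zero _) h2.symm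


end TwistedGroupAlgebraDatum

open TwistedGroupAlgebraDatum Module in
/-- For a twisted group algebra datum over `ℂ` with `W` finite abelian and `ZW = {1}`,
there is `d` with `d² = |W|` such that `A ≅ M_d(ℂ)` as `ℂ`-algebras. -/
theorem matrix_algebra_of_ZW_trivial {W : Type*} [CommGroup W] [Fintype W]
    {A : Type*} [Ring A] [Algebra ℂ A]
    (D : TwistedGroupAlgebraDatum W A) (hZ : D.ZW = {1}) :
    ∃ d : ℕ, d ^ 2 = Fintype.card W ∧
      Nonempty (A ≃ₐ[ℂ] Matrix (Fin d) (Fin d) ℂ) := by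
  classical
  haveI := D.nontrivialA
  haveI : FiniteDimensional ℂ A := Module.Finite.of_basis D.basis
  obtain ⟨L, hiso, hmax⟩ := D.exists_lagrangian
  obtain ⟨lam, hlam_ne, hlam_one, hlam_mul⟩ := D.exists_lam L hiso
  -- the left ideal J and the module V
  set G : Set A := {y | ∃ l : ↥L, y = (D.T (l : W) : A) - lam l • 1} with hG
  set J : Submodule A A := Submodule.span A G with hJ
  set V := A ⧸ J with hV
  -- ℂ-linear quotient map
  let mkc : A →ₗ[ℂ] V := LinearMap.restrictScalars ℂ J.mkQ
  have hmkc : ∀ a : A, mkc a = Submodule.Quotient.mk a := fun a => rfl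
  -- a functional vanishing on J but not at 1
  have hf : ∃ f : A →ₗ[ℂ] ℂ, (∀ y ∈ J, f y = 0) ∧ f 1 = 1 := by
    set g : W → ℂ := fun w => if h : w ∈ L then lam ⟨w, h⟩ else 0 with hg
    set f : A →ₗ[ℂ] ℂ := D.basis.constr ℂ g with hfdef
    have hfT : ∀ w : W, f (D.T w : A) = g w := by
      intro w
      rw [hfdef, ← D.basis_apply w, Basis.constr_basis]
    have hgen : ∀ y ∈ G, ∀ a : A, f (a * y) = 0 := by
      rintro y ⟨l, rfl⟩ a
      have hφ : f.comp (LinearMap.mulRight ℂ ((D.T (l : W) : A) - lam l • 1)) = 0 := by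
        apply D.basis.ext
        intro w
        simp only [LinearMap.comp_apply, LinearMap.mulRight_apply, LinearMap.zero_apply,
          basis_apply]
        rw [mul_sub, D.T_mul, mul_smul_comm, mul_one, map_sub, map_smul, map_smul, hfT, hfT]
        by_cases hw : w ∈ L
        · have hwl : w * (l : W) ∈ L := L.mul_mem hw l.2
          rw [hg]
          simp only [hwl, hw, dif_pos]
          have hlm := hlam_mul ⟨w, hw⟩ l
          have hcoe : (⟨w, hw⟩ : ↥L) * l = ⟨w * (l : W), hwl⟩ := rfl
          rw [hcoe] at hlm
          rw [smul_eq_mul, smul_eq_mul, ← hlm]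
          ring
        · have hwl : ¬(w * (l : W) ∈ L) := by
            intro hc
            exact hw (by simpa using L.mul_mem hc (L.inv_mem l.2))
          rw [hg]
          simp only [hwl, hw, dif_neg, not_false_iff]
          simp
      have := DFunLike.congr_fun hφ a
      simpa using this
    have hJ0 : ∀ y ∈ J, ∀ a : A, f (a * y) = 0 := by
      intro y hy
      induction hy using Submodule.span_induction with
      | mem y hy => exact hgen y hy
      | zero => simp
      | add y z _ _ hy' hz' => intro a; rw [mul_add, map_add, hy' a, hz' a, add_zero]
      | smul b y _ hy' =>
        intro a
        have hb : b • y = b * y := rfl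
        rw [hb, ← mul_assoc]
        exact hy' (a * b)
    have h1 : f 1 = (D.μ 1 1 : ℂ)⁻¹ * lam 1 := by
      rw [D.one_eq, map_smul, hfT, hg, smul_eq_mul]
      simp only [L.one_mem, dif_pos]
      rfl
    have hne : f 1 ≠ 0 := by
      rw [h1, hlam_one]
      field_simp
      exact one_ne_zero
    refine ⟨(f 1)⁻¹ • f, ?_, ?_⟩
    · intro y hy
      have h0 : f y = 0 := by simpa using hJ0 y hy 1
      simp [h0]
    · simp [LinearMap.smul_apply, inv_mul_cancel₀ hne]
  obtain ⟨f, hfJ, hf1⟩ := hf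
  have hJne : J ≠ ⊤ := by
    intro h
    have h0 : f 1 = 0 := hfJ 1 (h ▸ Submodule.mem_top)
    rw [hf1] at h0
    exact one_ne_zero h0
  haveI : Nontrivial V := Submodule.Quotient.nontrivial_iff.mpr hJne
  let ρ : A →ₐ[ℂ] Module.End ℂ V := Algebra.lsmul ℂ ℂ V
  haveI : Nontrivial (Module.End ℂ V) := by
    obtain ⟨v, hv⟩ := exists_ne (0 : V)
    exact ⟨1, 0, fun h => hv (by simpa using DFunLike.congr_fun h v)⟩
  have hinj : Function.Injective ρ := D.algHom_injective hZ ρ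
  haveI : Module.Finite ℂ V :=
    Module.Finite.of_surjective mkc (Submodule.Quotient.mk_surjective J)
  -- spanning family for V indexed by W ⧸ L
  have hswl : ∀ w : W, ∃ c : ℂ, mkc (D.T w : A)
      = c • mkc (D.T (Quotient.out (QuotientGroup.mk w : W ⧸ L)) : A) := by
    intro w
    set r : W := Quotient.out (QuotientGroup.mk w : W ⧸ L) with hr
    have hrl : r⁻¹ * w ∈ L := by
      rw [← QuotientGroup.eq]
      exact QuotientGroup.out_eq' _
    set l : ↥L := ⟨r⁻¹ * w, hrl⟩ with hldef
    have hrw : r * (r⁻¹ * w) = w := by group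
    refine ⟨(D.μ r (r⁻¹ * w) : ℂ)⁻¹ * lam l, ?_⟩
    have h1 : (D.T w : A) = (D.μ r (r⁻¹ * w) : ℂ)⁻¹ • ((D.T r : A) * (D.T (r⁻¹ * w) : A)) := by
      rw [D.T_mul, hrw, smul_smul, inv_mul_cancel₀ (Units.ne_zero _), one_smul]
    have h2 : mkc ((D.T r : A) * (D.T (r⁻¹ * w) : A)) = lam l • mkc (D.T r : A) := by
      rw [hmkc, hmkc, ← Submodule.Quotient.mk_smul]
      apply (Submodule.Quotient.eq J).mpr
      have h3 : (D.T r : A) * (D.T (r⁻¹ * w) : A) - lam l • (D.T r : A)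
          = (D.T r : A) • ((D.T ((l : W)) : A) - lam l • 1) := by
        simp only [smul_eq_mul, mul_sub, mul_smul_comm, mul_one]
        rfl
      rw [h3]
      exact J.smul_mem _ (Submodule.subset_span ⟨l, rfl⟩)
    rw [h1, map_smul, h2, smul_smul]
  have hspan : Submodule.span ℂ
      (Set.range fun c : W ⧸ L => mkc (D.T (Quotient.out c) : A)) = ⊤ := by
    rw [eq_top_iff]
    rintro v -
    obtain ⟨a, rfl⟩ := Submodule.Quotient.mk_surjective J v
    rw [← hmkc a, ← D.basis.sum_repr a, map_sum]
    refine Submodule.sum_mem _ fun w _ => ?_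
    rw [map_smul]
    refine Submodule.smul_mem _ _ ?_
    rw [D.basis_apply]
    obtain ⟨c, hc⟩ := hswl w
    rw [hc]
    exact Submodule.smul_mem _ _ (Submodule.subset_span ⟨QuotientGroup.mk w, rfl⟩)
  haveI : Fintype (W ⧸ L) := Quotient.fintype _
  have hdim_le : finrank ℂ V ≤ Fintype.card (W ⧸ L) := finrank_le_of_span_eq_top hspan
  have hcount : Nat.card (W ⧸ L) * Nat.card (W ⧸ L) ≤ Fintype.card W :=
    D.card_quotient_mul_self_le L hiso hmax
  have hA_rank : finrank ℂ A = Fintype.card W := finrank_eq_card_basis D.basis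
  have hEnd : finrank ℂ (Module.End ℂ V) = finrank ℂ V * finrank ℂ V :=
    finrank_linearMap ℂ ℂ V V
  have hle1 : finrank ℂ A ≤ finrank ℂ (Module.End ℂ V) :=
    LinearMap.finrank_le_finrank_of_injective (f := ρ.toLinearMap) hinj
  have hmq : Nat.card (W ⧸ L) = Fintype.card (W ⧸ L) := Nat.card_eq_fintype_card
  have h1 : Fintype.card W ≤ finrank ℂ V * finrank ℂ V := by
    rw [← hA_rank]
    rw [hEnd] at hle1
    exact hle1
  have h3 : Fintype.card (W ⧸ L) * Fintype.card (W ⧸ L) ≤ Fintype.card W := by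
    rw [← hmq]
    exact hcount
  have hdd : finrank ℂ V * finrank ℂ V = Fintype.card W :=
    le_antisymm (le_trans (Nat.mul_le_mul hdim_le hdim_le) h3) h1
  have hfr_eq : finrank ℂ A = finrank ℂ (Module.End ℂ V) := by
    rw [hA_rank, hEnd, hdd]
  have hsurj : Function.Surjective ρ :=
    (LinearMap.injective_iff_surjective_of_finrank_eq_finrank
      (f := ρ.toLinearMap) hfr_eq).mp hinj
  refine ⟨finrank ℂ V, by rw [pow_two]; exact hdd, ?_⟩
  exact ⟨(AlgEquiv.ofBijective ρ ⟨hinj, hsurj⟩).trans (algEquivMatrix (Module.finBasis ℂ V))⟩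
end

section
/- Let Q be a finite abelian group and b : Q × Q → ℂˣ a map that is multiplicative in each variable, alternating (b(x, x) = 1 for all x ∈ Q), and nondegenerate (if b(x, y) = 1 for all y ∈ Q then x = 1). Let C be a subgroup of Q such that C = {x ∈ Q : b(x, c) = 1 for all c ∈ C} (a Lagrangian subgroup). Then the group homomorphism from Q to the group of homomorphisms C → ℂˣ, sending x to the character c ↦ b(x, c) of C, is surjective and has kernel exactly C; hence it induces a group isomorphism Q/C ≅ Hom(C, ℂˣ). -/
lemma card_hom_complex_units (G : Type*) [CommGroup G] [Finite G] :
    Nonempty ((G →* ℂˣ) ≃* G) := by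
  have : NeZero ((Monoid.exponent G : ℂ)) :=
    ⟨by exact_mod_cast Monoid.exponent_ne_zero_of_finite⟩
  exact CommGroup.monoidHom_mulEquiv_of_hasEnoughRootsOfUnity G ℂ

/-- Let `Q` be a finite abelian group and `b : Q × Q → ℂˣ` a nondegenerate alternating
bicharacter. If `C` is a Lagrangian subgroup of `Q` (i.e. `C` equals its own orthogonal
complement with respect to `b`), then the homomorphism `Q → Hom(C, ℂˣ)`, `x ↦ (c ↦ b x c)`,
is surjective with kernel exactly `C`; hence it induces `Q/C ≃* Hom(C, ℂˣ)`. -/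
theorem lagrangian_quotient_iso_characters {Q : Type*} [CommGroup Q] [Fintype Q]
    (b : Q → Q → ℂˣ)
    (hmul_left : ∀ x x' y : Q, b (x * x') y = b x y * b x' y)
    (hmul_right : ∀ x y y' : Q, b x (y * y') = b x y * b x y')
    (halt : ∀ x : Q, b x x = 1)
    (hnd : ∀ x : Q, (∀ y : Q, b x y = 1) → x = 1)
    (C : Subgroup Q)
    (hC : (C : Set Q) = {x : Q | ∀ c ∈ C, b x c = 1}) :
    ∃ φ : Q →* (C →* ℂˣ),
      (∀ (x : Q) (c : C), φ x c = b x (c : Q)) ∧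
      Function.Surjective φ ∧
      φ.ker = C ∧
      Nonempty ((Q ⧸ C) ≃* (C →* ℂˣ)) := by
  have hb1 : ∀ x : Q, b x 1 = 1 := by
    intro x
    have h := hmul_right x 1 1
    rw [mul_one] at h
    exact left_eq_mul.mp h
  have hb1' : ∀ y : Q, b 1 y = 1 := by
    intro y
    have h := hmul_left 1 1 y
    rw [mul_one] at h
    exact left_eq_mul.mp h
  have hbinv : ∀ x y : Q, b x⁻¹ y = (b x y)⁻¹ := by
    intro x y
    have h := hmul_left x x⁻¹ y
    rw [mul_inv_cancel, hb1'] at h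
    exact (eq_inv_of_mul_eq_one_right h.symm)
  -- membership in C
  have hmemC : ∀ x : Q, x ∈ C ↔ ∀ c ∈ C, b x c = 1 := by
    intro x
    rw [← SetLike.mem_coe, hC]
    rfl
  -- the homomorphism
  let φ : Q →* (C →* ℂˣ) :=
    { toFun := fun x =>
        { toFun := fun c => b x (c : Q),
          map_one' := hb1 x,
          map_mul' := fun c c' => hmul_right x c c' },
      map_one' := by ext c; exact congrArg Units.val (hb1' c),
      map_mul' := fun x x' => by ext c; exact congrArg Units.val (hmul_left x x' c) }
  -- kernel
  have hker : φ.ker = C := by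
    ext x
    rw [MonoidHom.mem_ker, hmemC]
    constructor
    · intro h c hc
      exact DFunLike.congr_fun h ⟨c, hc⟩
    · intro h
      ext c
      exact congrArg Units.val (h c c.2)
  -- the map C → Hom(Q/C, ℂˣ)
  have hCC : ∀ c : Q, c ∈ C → ∀ c' ∈ C, b c c' = 1 := fun c hc => (hmemC c).mp hc
  let ψ : C → ((Q ⧸ C) →* ℂˣ) := fun c =>
    QuotientGroup.lift C
      { toFun := fun y => b (c : Q) y,
        map_one' := hb1 c,
        map_mul' := fun y y' => hmul_right c y y' }
      (fun y hy => hCC c c.2 y hy)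
  have hψ : Function.Injective ψ := by
    intro c c' h
    have hall : ∀ y : Q, b ((c : Q) * (c' : Q)⁻¹) y = 1 := by
      intro y
      have := DFunLike.congr_fun h (QuotientGroup.mk y)
      simp only [ψ, QuotientGroup.lift_mk, MonoidHom.coe_mk, OneHom.coe_mk] at this
      change b (c : Q) y = b (c' : Q) y at this
      rw [hmul_left, hbinv, this, mul_inv_cancel]
    have := hnd _ hall
    have : (c : Q) = (c' : Q) := by
      rwa [mul_inv_eq_one] at this
    exact Subtype.ext this
  -- cardinality bookkeeping
  have finCd : Finite (C →* ℂˣ) :=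
    Finite.of_equiv C (card_hom_complex_units C).some.symm.toEquiv
  have finQCd : Finite ((Q ⧸ C) →* ℂˣ) :=
    Finite.of_equiv (Q ⧸ C) (card_hom_complex_units (Q ⧸ C)).some.symm.toEquiv
  have hcard1 : Nat.card (C →* ℂˣ) = Nat.card C :=
    Nat.card_congr (card_hom_complex_units C).some.toEquiv
  have hcard2 : Nat.card ((Q ⧸ C) →* ℂˣ) = Nat.card (Q ⧸ C) :=
    Nat.card_congr (card_hom_complex_units (Q ⧸ C)).some.toEquiv
  have hle1 : Nat.card C ≤ Nat.card (Q ⧸ C) := by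
    rw [← hcard2]
    exact Nat.card_le_card_of_injective ψ hψ
  have hrange : Nat.card φ.range = Nat.card (Q ⧸ C) := by
    rw [← Nat.card_congr (QuotientGroup.quotientKerEquivRange φ).toEquiv, hker]
  have hle2 : Nat.card (Q ⧸ C) ≤ Nat.card (C →* ℂˣ) := by
    rw [← hrange]
    exact Nat.card_le_card_of_injective _ Subtype.val_injective
  have hcardeq : Nat.card φ.range = Nat.card (C →* ℂˣ) := by
    omega
  have hrtop : φ.range = ⊤ := by
    have := Subgroup.card_eq_iff_eq_top φ.range
    exact (Subgroup.card_eq_iff_eq_top φ.range).mp hcardeq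
  have hsurj : Function.Surjective φ := MonoidHom.range_eq_top.mp hrtop
  exact ⟨φ, fun x c => rfl, hsurj, hker,
    ⟨(QuotientGroup.quotientMulEquivOfEq hker.symm).trans
      (QuotientGroup.quotientKerEquivOfSurjective φ hsurj)⟩⟩
end

section
/- Let k be a finite field with q elements and let χ : kˣ → ℂˣ be a group homomorphism with χ ≠ 1 and χ² = 1 (the Legendre symbol of k). In the group algebra ℂ[SL₂(k)], define the elements ⟨U⟩ := q⁻¹ · Σ_{x ∈ k} [U(x)], p_χ := (q − 1)⁻¹ · Σ_{x ∈ kˣ} χ(x) · [D(x)], T_e := p_χ * ⟨U⟩, and T' := ⟨U⟩ * [s] * p_χ * ⟨U⟩. Then T_e * T_e = T_e and T' * T' = χ(−1) · q⁻¹ · T_e. (In particular T'² is a scalar multiple of the idempotent T_e, so the quadratic relation satisfied by the associated Hecke algebra generator has parameter q_{θ,α} = 1.) -/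
open Matrix MonoidAlgebra

noncomputable section

variable (k : Type*) [Field k] [Fintype k] [DecidableEq k]

/-- The special linear group `SL₂(k)`. -/
abbrev SL2 := Matrix.SpecialLinearGroup (Fin 2) k

/-- The unipotent matrix `U(x)` with rows `(1, x)` and `(0, 1)`. -/
def Umat (x : k) : SL2 k :=
  ⟨!![1, x; 0, 1], by simp [Matrix.det_fin_two_of]⟩

/-- The diagonal matrix `D(x)` with entries `x` and `x⁻¹`, for `x ∈ kˣ`. -/
def Dmat (x : kˣ) : SL2 k :=
  ⟨!![(x : k), 0; 0, ((x⁻¹ : kˣ) : k)], by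
    simp [Matrix.det_fin_two_of, ← Units.val_mul]⟩

/-- The matrix `s` with rows `(0, 1)` and `(−1, 0)`. -/
def smat : SL2 k :=
  ⟨!![0, 1; -1, 0], by simp [Matrix.det_fin_two_of]⟩

/-- `⟨U⟩ = q⁻¹ · Σ_{x ∈ k} [U(x)]` in `ℂ[SL₂(k)]`. -/
def bracketU : MonoidAlgebra ℂ (SL2 k) :=
  ((Fintype.card k : ℂ))⁻¹ • ∑ x : k, MonoidAlgebra.of ℂ (SL2 k) (Umat k x)

/-- `p_χ = (q − 1)⁻¹ · Σ_{x ∈ kˣ} χ(x) · [D(x)]` in `ℂ[SL₂(k)]`. -/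
def pChi (χ : kˣ →* ℂˣ) : MonoidAlgebra ℂ (SL2 k) :=
  ((Fintype.card k : ℂ) - 1)⁻¹ •
    ∑ x : kˣ, ((χ x : ℂ) • MonoidAlgebra.of ℂ (SL2 k) (Dmat k x))

set_option linter.unusedSectionVars false

lemma Umat_mul (x y : k) : Umat k x * Umat k y = Umat k (x + y) := by
  apply Subtype.ext
  simp only [Matrix.SpecialLinearGroup.coe_mul]
  simp [Umat, Matrix.SpecialLinearGroup.coe_mul, Matrix.mul_fin_two, add_comm]

lemma Umat_zero : Umat k 0 = 1 := by
  apply Subtype.ext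
  simp [Umat]
  exact (Matrix.one_fin_two).symm

lemma Dmat_mul (x y : kˣ) : Dmat k x * Dmat k y = Dmat k (x * y) := by
  apply Subtype.ext
  simp only [Matrix.SpecialLinearGroup.coe_mul]
  simp [Dmat, Matrix.SpecialLinearGroup.coe_mul, Matrix.mul_fin_two, Units.val_mul,
    mul_comm]

lemma smat_sq : smat k * smat k = Dmat k (-1) := by
  apply Subtype.ext
  simp only [Matrix.SpecialLinearGroup.coe_mul]
  simp [smat, Dmat, Matrix.SpecialLinearGroup.coe_mul, Matrix.mul_fin_two]

lemma Dmat_mul_Umat (a : kˣ) (x : k) :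
    Dmat k a * Umat k x = Umat k ((a : k)^2 * x) * Dmat k a := by
  apply Subtype.ext
  simp only [Matrix.SpecialLinearGroup.coe_mul]
  ext i j
  fin_cases i <;> fin_cases j <;>
    · simp [Dmat, Umat, Matrix.SpecialLinearGroup.coe_mul, Matrix.mul_fin_two,
        Units.val_inv_eq_inv_val]
      try field_simp
      try ring

lemma smat_mul_Dmat (x : kˣ) : smat k * Dmat k x = Dmat k x⁻¹ * smat k := by
  apply Subtype.ext
  simp only [Matrix.SpecialLinearGroup.coe_mul]
  simp [smat, Dmat, Matrix.SpecialLinearGroup.coe_mul, Matrix.mul_fin_two]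

lemma bruhat (x : k) (hx : x ≠ 0) :
    smat k * Umat k x * smat k =
      Umat k (-x⁻¹) * Dmat k (Units.mk0 x hx)⁻¹ * smat k * Umat k (-x⁻¹) * Dmat k (-1) := by
  apply Subtype.ext
  simp only [Matrix.SpecialLinearGroup.coe_mul]
  simp [smat, Umat, Dmat, Matrix.SpecialLinearGroup.coe_mul, Matrix.mul_fin_two,
    Units.val_inv_eq_inv_val]
  field_simp
  simp

lemma card_ne_zero' : (Fintype.card k : ℂ) ≠ 0 := by
  exact_mod_cast Fintype.card_ne_zero

lemma card_sub_one_ne_zero : ((Fintype.card k : ℂ) - 1) ≠ 0 := by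
  have h : 1 < Fintype.card k := Fintype.one_lt_card
  have h1 : (Fintype.card k : ℂ) ≠ 1 := by
    intro hh
    rw [show (1 : ℂ) = ((1 : ℕ) : ℂ) by norm_num] at hh
    have := Nat.cast_injective (R := ℂ) hh
    omega
  exact sub_ne_zero.mpr h1

lemma bracketU_mul_of (a : k) :
    bracketU k * MonoidAlgebra.of ℂ (SL2 k) (Umat k a) = bracketU k := by
  rw [bracketU, smul_mul_assoc, Finset.sum_mul]
  congr 1
  rw [← Equiv.sum_comp (Equiv.addRight a) (fun x => MonoidAlgebra.of ℂ (SL2 k) (Umat k x))]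
  refine Finset.sum_congr rfl fun x _ => ?_
  rw [← _root_.map_mul, Umat_mul]
  rfl

lemma of_mul_bracketU (a : k) :
    MonoidAlgebra.of ℂ (SL2 k) (Umat k a) * bracketU k = bracketU k := by
  rw [bracketU, mul_smul_comm, Finset.mul_sum]
  congr 1
  rw [← Equiv.sum_comp (Equiv.addLeft a) (fun x => MonoidAlgebra.of ℂ (SL2 k) (Umat k x))]
  refine Finset.sum_congr rfl fun x _ => ?_
  rw [← _root_.map_mul, Umat_mul]
  rfl

lemma bracketU_sq : bracketU k * bracketU k = bracketU k := by
  nth_rewrite 2 [bracketU]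
  rw [mul_smul_comm, Finset.mul_sum]
  have h : ∀ x : k, bracketU k * MonoidAlgebra.of ℂ (SL2 k) (Umat k x) = bracketU k :=
    bracketU_mul_of k
  rw [Finset.sum_congr rfl fun x _ => h x, Finset.sum_const, Finset.card_univ,
    ← Nat.cast_smul_eq_nsmul ℂ, smul_smul, inv_mul_cancel₀ (card_ne_zero' k), one_smul]

lemma chi_inv_val (χ : kˣ →* ℂˣ) (hχ2 : ∀ x : kˣ, χ x * χ x = 1) (a : kˣ) :
    ((χ a⁻¹ : ℂˣ) : ℂ) = ((χ a : ℂˣ) : ℂ) := by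
  rw [map_inv]
  have : (χ a)⁻¹ = χ a := inv_eq_of_mul_eq_one_right (hχ2 a)
  rw [this]

lemma chi_sq_val (χ : kˣ →* ℂˣ) (hχ2 : ∀ x : kˣ, χ x * χ x = 1) (a : kˣ) :
    ((χ a : ℂˣ) : ℂ) * ((χ a : ℂˣ) : ℂ) = 1 := by
  have := congrArg Units.val (hχ2 a)
  simpa using this

lemma pChi_mul_of (χ : kˣ →* ℂˣ) (hχ2 : ∀ x : kˣ, χ x * χ x = 1) (a : kˣ) :
    pChi k χ * MonoidAlgebra.of ℂ (SL2 k) (Dmat k a) = ((χ a : ℂˣ) : ℂ) • pChi k χ := by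
  rw [pChi, smul_mul_assoc, Finset.sum_mul, smul_comm]
  congr 1
  rw [← Equiv.sum_comp (Equiv.mulRight a)
    (fun x => ((χ x : ℂ) • MonoidAlgebra.of ℂ (SL2 k) (Dmat k x)))]
  rw [Finset.smul_sum]
  refine Finset.sum_congr rfl fun x _ => ?_
  simp only [Equiv.coe_mulRight, smul_mul_assoc]
  rw [← _root_.map_mul, Dmat_mul, smul_smul]
  congr 1
  rw [_root_.map_mul, Units.val_mul,
    show ((χ a : ℂˣ) : ℂ) * (((χ x : ℂˣ) : ℂ) * ((χ a : ℂˣ) : ℂ))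
      = ((χ x : ℂˣ) : ℂ) * (((χ a : ℂˣ) : ℂ) * ((χ a : ℂˣ) : ℂ)) from by ring,
    chi_sq_val k χ hχ2, mul_one]

lemma of_mul_pChi (χ : kˣ →* ℂˣ) (hχ2 : ∀ x : kˣ, χ x * χ x = 1) (a : kˣ) :
    MonoidAlgebra.of ℂ (SL2 k) (Dmat k a) * pChi k χ = ((χ a : ℂˣ) : ℂ) • pChi k χ := by
  rw [pChi, mul_smul_comm, Finset.mul_sum, smul_comm]
  congr 1
  rw [← Equiv.sum_comp (Equiv.mulLeft a)
    (fun x => ((χ x : ℂ) • MonoidAlgebra.of ℂ (SL2 k) (Dmat k x)))]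
  rw [Finset.smul_sum]
  refine Finset.sum_congr rfl fun x _ => ?_
  simp only [Equiv.coe_mulLeft, mul_smul_comm]
  rw [← _root_.map_mul, Dmat_mul, smul_smul]
  congr 1
  rw [_root_.map_mul, Units.val_mul,
    show ((χ a : ℂˣ) : ℂ) * (((χ a : ℂˣ) : ℂ) * ((χ x : ℂˣ) : ℂ))
      = ((χ x : ℂˣ) : ℂ) * (((χ a : ℂˣ) : ℂ) * ((χ a : ℂˣ) : ℂ)) from by ring,
    chi_sq_val k χ hχ2, mul_one]

lemma card_units_cast : ((Fintype.card kˣ : ℕ) : ℂ) = (Fintype.card k : ℂ) - 1 := by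
  rw [Fintype.card_units, Nat.cast_sub Fintype.card_pos, Nat.cast_one]

lemma pChi_sq (χ : kˣ →* ℂˣ) (hχ2 : ∀ x : kˣ, χ x * χ x = 1) : pChi k χ * pChi k χ = pChi k χ := by
  nth_rewrite 1 [pChi]
  rw [smul_mul_assoc, Finset.sum_mul]
  have h : ∀ x : kˣ, ((χ x : ℂ) • MonoidAlgebra.of ℂ (SL2 k) (Dmat k x)) * pChi k χ
      = pChi k χ := by
    intro x
    rw [smul_mul_assoc, of_mul_pChi k χ hχ2, smul_smul, chi_sq_val k χ hχ2, one_smul]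
  rw [Finset.sum_congr rfl fun x _ => h x, Finset.sum_const, Finset.card_univ,
    ← Nat.cast_smul_eq_nsmul ℂ, card_units_cast, smul_smul,
    inv_mul_cancel₀ (card_sub_one_ne_zero k), one_smul]

lemma of_Dmat_mul_bracketU (a : kˣ) :
    MonoidAlgebra.of ℂ (SL2 k) (Dmat k a) * bracketU k
      = bracketU k * MonoidAlgebra.of ℂ (SL2 k) (Dmat k a) := by
  rw [bracketU, mul_smul_comm, smul_mul_assoc, Finset.mul_sum, Finset.sum_mul]
  congr 1
  rw [← Equiv.sum_comp (Equiv.mulLeft₀ ((a : k)^2) (pow_ne_zero 2 a.ne_zero))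
    (fun x => MonoidAlgebra.of ℂ (SL2 k) (Umat k x) * MonoidAlgebra.of ℂ (SL2 k) (Dmat k a))]
  refine Finset.sum_congr rfl fun x _ => ?_
  rw [← _root_.map_mul, Dmat_mul_Umat, _root_.map_mul]
  rfl

lemma bracketU_comm_pChi (χ : kˣ →* ℂˣ) : bracketU k * pChi k χ = pChi k χ * bracketU k := by
  rw [pChi, mul_smul_comm, smul_mul_assoc, Finset.mul_sum, Finset.sum_mul]
  congr 1
  refine Finset.sum_congr rfl fun x _ => ?_
  rw [mul_smul_comm, smul_mul_assoc, ← of_Dmat_mul_bracketU]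

lemma smat_comm_pChi (χ : kˣ →* ℂˣ) (hχ2 : ∀ x : kˣ, χ x * χ x = 1) :
    MonoidAlgebra.of ℂ (SL2 k) (smat k) * pChi k χ
      = pChi k χ * MonoidAlgebra.of ℂ (SL2 k) (smat k) := by
  rw [pChi, mul_smul_comm, smul_mul_assoc, Finset.mul_sum, Finset.sum_mul]
  congr 1
  rw [← Equiv.sum_comp (Equiv.inv kˣ)
    (fun x => ((χ x : ℂ) • MonoidAlgebra.of ℂ (SL2 k) (Dmat k x))
      * MonoidAlgebra.of ℂ (SL2 k) (smat k))]
  refine Finset.sum_congr rfl fun x _ => ?_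
  simp only [Equiv.inv_apply, mul_smul_comm, smul_mul_assoc]
  rw [← _root_.map_mul, ← _root_.map_mul, smat_mul_Dmat, chi_inv_val k χ hχ2]

lemma sum_chi_zero (χ : kˣ →* ℂˣ) (hχ : χ ≠ 1) : ∑ u : kˣ, ((χ u : ℂˣ) : ℂ) = 0 := by
  obtain ⟨u, hu⟩ : ∃ u, χ u ≠ 1 := by
    by_contra h
    push_neg at h
    exact hχ (MonoidHom.ext fun x => h x)
  have key : ((χ u : ℂˣ) : ℂ) * ∑ x : kˣ, ((χ x : ℂˣ) : ℂ)
      = ∑ x : kˣ, ((χ x : ℂˣ) : ℂ) := by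
    rw [Finset.mul_sum]
    rw [← Equiv.sum_comp (Equiv.mulLeft u) (fun x => ((χ x : ℂˣ) : ℂ))]
    refine Finset.sum_congr rfl fun x _ => ?_
    simp [_root_.map_mul]
  have hu' : ((χ u : ℂˣ) : ℂ) ≠ 1 := fun h => hu (Units.ext (by simpa using h))
  rcases mul_eq_zero.mp (show (((χ u : ℂˣ) : ℂ) - 1) * ∑ x : kˣ, ((χ x : ℂˣ) : ℂ) = 0 by
    rw [sub_mul, one_mul, key, sub_self]) with h | h
  · exact absurd (sub_eq_zero.mp h) hu'
  · exact h

lemma sum_split {M : Type*} [AddCommMonoid M] (f : k → M) :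
    ∑ x : k, f x = f 0 + ∑ u : kˣ, f (u : k) := by
  rw [← Finset.add_sum_erase _ f (Finset.mem_univ 0)]
  congr 1
  calc ∑ x ∈ Finset.univ.erase 0, f x
      = ∑ a : {a : k // a ≠ 0}, f ↑a :=
        Finset.sum_subtype (Finset.univ.erase 0) (fun x => by simp [Finset.mem_erase]) f
    _ = ∑ u : kˣ, f ↑(unitsEquivNeZero (G₀ := k) u) :=
        (Equiv.sum_comp (unitsEquivNeZero (G₀ := k)) (fun a : {a : k // a ≠ 0} => f ↑a)).symm
    _ = ∑ u : kˣ, f ↑u := by simp [unitsEquivNeZero]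

/-- For the Legendre symbol `χ` of a finite field `k` with `q` elements (`χ ≠ 1`, `χ² = 1`),
in `ℂ[SL₂(k)]` with `T_e := p_χ * ⟨U⟩` and `T' := ⟨U⟩ * [s] * p_χ * ⟨U⟩`, one has
`T_e * T_e = T_e` and `T' * T' = χ(−1) · q⁻¹ · T_e`. -/
theorem legendre_hecke_parameter_one (χ : kˣ →* ℂˣ) (hχ : χ ≠ 1)
    (hχ2 : ∀ x : kˣ, χ x * χ x = 1) :
    (pChi k χ * bracketU k) * (pChi k χ * bracketU k) = pChi k χ * bracketU k ∧
    (bracketU k * MonoidAlgebra.of ℂ (SL2 k) (smat k) * pChi k χ * bracketU k) *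
        (bracketU k * MonoidAlgebra.of ℂ (SL2 k) (smat k) * pChi k χ * bracketU k) =
      (((χ (-1) : ℂˣ) : ℂ) * (Fintype.card k : ℂ)⁻¹) • (pChi k χ * bracketU k) := by
  set P := pChi k χ with hPdef
  set U := bracketU k with hUdef
  set S := MonoidAlgebra.of ℂ (SL2 k) (smat k) with hSdef
  have hPUz : ∀ z, U * (P * z) = P * (U * z) := fun z => by
    rw [← mul_assoc, bracketU_comm_pChi, mul_assoc]
  have hUUz : ∀ z, U * (U * z) = U * z := fun z => by
    rw [← mul_assoc, bracketU_sq]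
  have hSPz : ∀ z, S * (P * z) = P * (S * z) := fun z => by
    rw [← mul_assoc, smat_comm_pChi k χ hχ2, mul_assoc]
  have hUofUz : ∀ (a : k) (z), U * (MonoidAlgebra.of ℂ (SL2 k) (Umat k a) * z) = U * z :=
    fun a z => by rw [← mul_assoc, bracketU_mul_of]
  have hD_E : ∀ a : kˣ, MonoidAlgebra.of ℂ (SL2 k) (Dmat k a) * (P * U)
      = ((χ a : ℂˣ) : ℂ) • (P * U) := fun a => by
    rw [← mul_assoc, of_mul_pChi k χ hχ2, smul_mul_assoc]
  have hofU_E : ∀ a : k, MonoidAlgebra.of ℂ (SL2 k) (Umat k a) * (P * U) = P * U :=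
    fun a => by
      rw [← bracketU_comm_pChi, ← mul_assoc, of_mul_bracketU, bracketU_comm_pChi]
  have hDSz : ∀ (a : kˣ) (z), MonoidAlgebra.of ℂ (SL2 k) (Dmat k a⁻¹) * (S * z)
      = S * (MonoidAlgebra.of ℂ (SL2 k) (Dmat k a) * z) := fun a z => by
    rw [← mul_assoc, ← mul_assoc, ← _root_.map_mul, ← _root_.map_mul, ← smat_mul_Dmat]
  have hE2 : P * (U * (P * U)) = P * U := by
    rw [hPUz, bracketU_sq, ← mul_assoc, pChi_sq k χ hχ2]
  have part1 : (P * U) * (P * U) = P * U := by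
    rw [mul_assoc]; exact hE2
  refine ⟨part1, ?_⟩
  -- Part 2
  simp only [mul_assoc]
  rw [hUUz, hSPz, hPUz]
  -- now : P * (U * (S * (U * (S * (P * U))))) = c • (P * U)
  have hmid : S * (U * (S * (P * U)))
      = (Fintype.card k : ℂ)⁻¹ • ∑ x : k,
          (MonoidAlgebra.of ℂ (SL2 k) (smat k * Umat k x * smat k) * (P * U)) := by
    rw [hUdef, bracketU, smul_mul_assoc, mul_smul_comm, Finset.sum_mul, Finset.mul_sum]
    refine congrArg ((Fintype.card k : ℂ)⁻¹ • ·) ?_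
    refine Finset.sum_congr rfl fun x _ => ?_
    simp only [_root_.map_mul, mul_assoc]
    rfl
  rw [hmid, mul_smul_comm, mul_smul_comm, Finset.mul_sum, Finset.mul_sum]
  rw [sum_split k (fun x => P * (U * (MonoidAlgebra.of ℂ (SL2 k)
    (smat k * Umat k x * smat k) * (P * U))))]
  have t0 : P * (U * (MonoidAlgebra.of ℂ (SL2 k)
      (smat k * Umat k 0 * smat k) * (P * U))) = ((χ (-1) : ℂˣ) : ℂ) • (P * U) := by
    rw [Umat_zero, mul_one, smat_sq, hD_E, mul_smul_comm, mul_smul_comm, hE2]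
  have tu : ∀ u : kˣ, P * (U * (MonoidAlgebra.of ℂ (SL2 k)
      (smat k * Umat k (u : k) * smat k) * (P * U)))
      = (((χ (-1) : ℂˣ) : ℂ) * ((χ u : ℂˣ) : ℂ)) •
          (P * (U * (S * (P * U)))) := by
    intro u
    rw [bruhat k (u : k) u.ne_zero, Units.mk0_val]
    simp only [_root_.map_mul, mul_assoc]
    rw [hD_E]
    simp only [mul_smul_comm]
    rw [hofU_E, hDSz, hD_E]
    simp only [mul_smul_comm]
    rw [hUofUz, smul_smul]
  rw [t0, Finset.sum_congr rfl fun u _ => tu u, ← Finset.sum_smul, ← Finset.mul_sum,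
    sum_chi_zero k χ hχ, mul_zero, zero_smul, add_zero, smul_smul,
    mul_comm ((Fintype.card k : ℂ)⁻¹)]

end
end

section
/- Let n be a natural number, σ a permutation of Fin n, and ε : Fin n → ℝ a function with ε(i) ∈ {1, −1} for every i. The following are equivalent: (a) the only function x : Fin n → ℝ satisfying x(i) = ε(i) · x(σ⁻¹(i)) for all i ∈ Fin n is the zero function; (b) for every orbit O of the cyclic group generated by σ acting on Fin n, the product ∏_{i ∈ O} ε(i) equals −1. -/
/-- The orbit of `i` under the cyclic group generated by `σ`. -/
def permOrbit {n : ℕ} (σ : Equiv.Perm (Fin n)) (i : Fin n) : Set (Fin n) :=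
  {j : Fin n | ∃ k : ℤ, (σ ^ k) i = j}

open Function Finset in
/-- A signed permutation `(ε, σ)` of `Fin n` (with `ε` a sign vector) has no nonzero fixed
vector, i.e. the only `x : Fin n → ℝ` with `x i = ε i · x (σ⁻¹ i)` for all `i` is `x = 0`,
if and only if for every orbit `O` of the cyclic group generated by `σ` the sign product
`∏_{i ∈ O} ε i` equals `−1`. -/
theorem signedPerm_elliptic_iff (n : ℕ) (σ : Equiv.Perm (Fin n)) (ε : Fin n → ℝ)
    (hε : ∀ i, ε i = 1 ∨ ε i = -1) :
    (∀ x : Fin n → ℝ, (∀ i, x i = ε i * x (σ⁻¹ i)) → x = 0) ↔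
      (∀ i : Fin n, ∏ j ∈ (Set.toFinite (permOrbit σ i)).toFinset, ε j = -1) := by
  classical
  set f : Fin n → Fin n := ⇑σ⁻¹ with hf
  have hsq : ∀ j, ε j * ε j = 1 := by
    intro j; rcases hε j with h | h <;> rw [h] <;> norm_num
  have hper : ∀ i : Fin n, i ∈ periodicPts f := by
    intro i
    refine mk_mem_periodicPts (orderOf_pos σ⁻¹) ?_
    show f^[orderOf σ⁻¹] i = i
    rw [hf, Equiv.Perm.iterate_eq_pow, pow_orderOf_eq_one]; rfl
  have hmpos : ∀ i, 0 < minimalPeriod f i :=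
    fun i => minimalPeriod_pos_of_mem_periodicPts (hper i)
  have horb : ∀ i : Fin n, (Set.toFinite (permOrbit σ i)).toFinset
      = Finset.image (fun t => f^[t] i) (Finset.range (minimalPeriod f i)) := by
    intro i
    ext j
    simp only [Set.Finite.mem_toFinset, Finset.mem_image, Finset.mem_range, permOrbit,
      Set.mem_setOf_eq]
    constructor
    · rintro hk
      have hsc : Equiv.Perm.SameCycle σ⁻¹ i j := Equiv.Perm.sameCycle_inv.mpr hk
      obtain ⟨t, -, ht⟩ := hsc.exists_pow_eq'
      refine ⟨t % minimalPeriod f i, Nat.mod_lt _ (hmpos i), ?_⟩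
      rw [iterate_mod_minimalPeriod_eq]
      rw [hf, Equiv.Perm.iterate_eq_pow]; exact ht
    · rintro ⟨t, -, rfl⟩
      refine ⟨-(t : ℤ), ?_⟩
      rw [hf, Equiv.Perm.iterate_eq_pow, zpow_neg, zpow_natCast, inv_pow]
  have hprod : ∀ i : Fin n, ∏ j ∈ (Set.toFinite (permOrbit σ i)).toFinset, ε j
      = ∏ t ∈ Finset.range (minimalPeriod f i), ε (f^[t] i) := by
    intro i
    rw [horb i, Finset.prod_image]
    intro a ha b hb hab
    exact iterate_injOn_Iio_minimalPeriod (Finset.mem_range.mp ha) (Finset.mem_range.mp hb) hab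
  have hsign : ∀ (i : Fin n) (t : ℕ), (∏ s ∈ Finset.range t, ε (f^[s] i)) = 1 ∨
      (∏ s ∈ Finset.range t, ε (f^[s] i)) = -1 := by
    intro i t
    induction t with
    | zero => left; simp
    | succ t ih =>
      rw [Finset.prod_range_succ]
      rcases ih with h | h <;> rcases hε (f^[t] i) with h' | h' <;> rw [h, h'] <;> norm_num
  have hrec : ∀ x : Fin n → ℝ, (∀ i, x i = ε i * x (σ⁻¹ i)) → ∀ (i : Fin n) (t : ℕ),
      x i = (∏ s ∈ Finset.range t, ε (f^[s] i)) * x (f^[t] i) := by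
    intro x hxr i t
    induction t with
    | zero => simp
    | succ t ih =>
      have h1 : x (f^[t] i) = ε (f^[t] i) * x (f (f^[t] i)) := hxr (f^[t] i)
      rw [Finset.prod_range_succ, Function.iterate_succ_apply', ih, h1]
      ring
  constructor
  · -- elliptic → all orbit products are -1
    intro h i
    rw [hprod i]
    by_contra hne
    have hP1 : (∏ s ∈ Finset.range (minimalPeriod f i), ε (f^[s] i)) = 1 :=
      (hsign i (minimalPeriod f i)).resolve_right hne
    set m := minimalPeriod f i with hm
    set x : Fin n → ℝ := fun j => ∑ t ∈ Finset.range m,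
      if f^[t] i = j then (∏ s ∈ Finset.range t, ε (f^[s] i)) else 0 with hxdef
    have hxval : ∀ t, t < m → x (f^[t] i) = ∏ s ∈ Finset.range t, ε (f^[s] i) := by
      intro t ht
      simp only [hxdef]
      rw [Finset.sum_eq_single_of_mem t (Finset.mem_range.mpr ht)]
      · rw [if_pos rfl]
      · intro b hb hbt
        rw [if_neg]
        exact fun hEq => hbt (iterate_injOn_Iio_minimalPeriod (Finset.mem_range.mp hb) ht hEq)
    have hxzero : ∀ j : Fin n, (∀ t, t < m → f^[t] i ≠ j) → x j = 0 := by
      intro j hj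
      rw [hxdef]
      refine Finset.sum_eq_zero fun t ht => ?_
      rw [if_neg (hj t (Finset.mem_range.mp ht))]
    have hrel : ∀ j, x j = ε j * x (σ⁻¹ j) := by
      intro j
      by_cases hj : ∃ t, t < m ∧ f^[t] i = j
      · obtain ⟨t, ht, rfl⟩ := hj
        have hstep : σ⁻¹ (f^[t] i) = f^[t + 1] i := by
          rw [Function.iterate_succ_apply']
        rw [hstep]
        rcases lt_or_eq_of_le (Nat.succ_le_of_lt ht) with h2 | h2
        · rw [hxval t ht, hxval (t + 1) h2, Finset.prod_range_succ]
          linear_combination (-(∏ s ∈ Finset.range t, ε (f^[s] i))) * hsq (f^[t] i)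
        · -- t + 1 = m
          have h2' : t + 1 = m := h2
          have hit : f^[t + 1] i = f^[0] i := by
            rw [h2', hm]
            simp [iterate_minimalPeriod]
          rw [hit, hxval 0 (hmpos i), hxval t ht]
          simp only [Finset.range_zero, Finset.prod_empty, mul_one]
          have hPm : (∏ s ∈ Finset.range (t + 1), ε (f^[s] i)) = 1 := by
            rw [h2']; exact hP1
          rw [Finset.prod_range_succ] at hPm
          linear_combination ε (f^[t] i) * hPm +
            (-(∏ s ∈ Finset.range t, ε (f^[s] i))) * hsq (f^[t] i)
      · push_neg at hj
        rw [hxzero j hj]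
        have hj' : ∀ t, t < m → f^[t] i ≠ σ⁻¹ j := by
          intro t ht hEq
          rcases Nat.eq_zero_or_pos t with rfl | htpos
          · -- i = σ⁻¹ j, so j = σ i = f^[m-1] i
            have hval : f^[m - 1] i = j := by
              have h1 : f^[m] i = i := by rw [hm]; exact iterate_minimalPeriod
              have h2 : f (f^[m - 1] i) = i := by
                have hh : f^[m - 1 + 1] i = f (f^[m - 1] i) :=
                  Function.iterate_succ_apply' f (m - 1) i
                rw [Nat.sub_add_cancel (hmpos i)] at hh
                rw [← hh, h1]
              have h3 : σ⁻¹ (f^[m - 1] i) = σ⁻¹ j := by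
                simp only [Function.iterate_zero, id_eq] at hEq
                calc σ⁻¹ (f^[m - 1] i) = f (f^[m - 1] i) := rfl
                  _ = i := h2
                  _ = σ⁻¹ j := hEq
              exact σ⁻¹.injective h3
            exact hj (m - 1) (Nat.sub_lt (hmpos i) one_pos) hval
          · obtain ⟨s, rfl⟩ := Nat.exists_eq_succ_of_ne_zero htpos.ne'
            have h3 : σ⁻¹ (f^[s] i) = σ⁻¹ j := by
              calc σ⁻¹ (f^[s] i) = f (f^[s] i) := rfl
                _ = f^[s + 1] i := (Function.iterate_succ_apply' f s i).symm
                _ = σ⁻¹ j := hEq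
            exact hj s (Nat.lt_of_succ_lt ht) (σ⁻¹.injective h3)
        rw [hxzero (σ⁻¹ j) hj']
        ring
    have hx0 : x = 0 := h x hrel
    have hxi : x i = 1 := by
      have := hxval 0 (hmpos i)
      simpa using this
    rw [hx0] at hxi
    simp at hxi
  · -- all orbit products -1 → elliptic
    intro h x hxr
    funext i
    have h1 := hrec x hxr i (minimalPeriod f i)
    rw [iterate_minimalPeriod] at h1
    have hP : (∏ s ∈ Finset.range (minimalPeriod f i), ε (f^[s] i)) = -1 := by
      rw [← hprod i]; exact h i
    rw [hP] at h1
    have : x i = 0 := by linarith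
    simpa using this
end

section
/- Let σ be a permutation of Fin 4 and ε : Fin 4 → ℝ a function with ε(i) ∈ {1, −1} for every i and ∏_{i} ε(i) = 1 (so the pair (ε, σ) corresponds to an element of the Weyl group of type D₄, realized as permutations of the coordinates of ℝ⁴ composed with an even number of sign changes). Then the signed permutation (ε, σ) has no nonzero fixed vector, i.e. the only x : Fin 4 → ℝ with x(i) = ε(i) · x(σ⁻¹(i)) for all i is x = 0, if and only if one of the following holds: (i) σ is a product of two disjoint transpositions (cycle type {2, 2}) and the product of ε over each of the two σ-orbits equals −1; (ii) σ is a 3-cycle, the product of ε over its 3-element orbit equals −1, and ε takes the value −1 at the fixed point of σ; (iii) σ is the identity and ε(i) = −1 for all i. -/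
/-- The product of the sign vector `ε` over the `σ`-orbit of `i`. -/
noncomputable def orbitSignProd {n : ℕ} (σ : Equiv.Perm (Fin n)) (ε : Fin n → ℝ)
    (i : Fin n) : ℝ :=
  ∏ j ∈ (Set.toFinite (permOrbit σ i)).toFinset, ε j

open Equiv Finset

variable {n : ℕ}

lemma orbitSignProd_eq (σ : Perm (Fin n)) (ε : Fin n → ℝ) (i : Fin n) :
    orbitSignProd σ ε i = ∏ j ∈ Finset.univ.filter (fun j => σ.SameCycle i j), ε j := by
  rw [orbitSignProd]
  congr 1
  ext j
  simp [permOrbit]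
  rfl

lemma orbitSignProd_pm (σ : Perm (Fin n)) (ε : Fin n → ℝ)
    (hε : ∀ i, ε i = 1 ∨ ε i = -1) (i : Fin n) :
    orbitSignProd σ ε i = 1 ∨ orbitSignProd σ ε i = -1 := by
  apply mul_self_eq_one_iff.mp
  rw [orbitSignProd, ← Finset.prod_mul_distrib]
  apply Finset.prod_eq_one
  intro j _
  rcases hε j with h | h <;> rw [h] <;> norm_num

lemma prod_one_of_ne_zero (σ : Perm (Fin n)) (ε : Fin n → ℝ)
    (hε : ∀ i, ε i = 1 ∨ ε i = -1) (x : Fin n → ℝ)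
    (hx : ∀ i, x i = ε i * x (σ⁻¹ i)) (i : Fin n) (hi : x i ≠ 0) :
    orbitSignProd σ ε i = 1 := by
  have hεne : ∀ j, ε j ≠ 0 := fun j => by rcases hε j with h | h <;> rw [h] <;> norm_num
  have key : ∀ k : ℤ, x ((σ ^ k) i) ≠ 0 := by
    intro k
    induction k using Int.induction_on with
    | zero => simpa using hi
    | succ k ih =>
        have h1 : (σ ^ (k + 1 : ℤ)) i = σ ((σ ^ (k : ℤ)) i) := by
          rw [add_comm, zpow_add, zpow_one, Perm.mul_apply]
        rw [h1, hx (σ ((σ ^ (k:ℤ)) i)), Perm.coe_inv, Equiv.symm_apply_apply]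
        exact mul_ne_zero (hεne _) ih
    | pred k ih =>
        have h2 : (σ ^ (-(k:ℤ) - 1)) i = σ⁻¹ ((σ ^ (-(k:ℤ))) i) := by
          rw [sub_eq_add_neg, add_comm, zpow_add, zpow_neg_one, Perm.mul_apply]
        intro h0
        apply ih
        rw [hx ((σ ^ (-(k:ℤ))) i), ← h2, h0, mul_zero]
  set T := Finset.univ.filter (fun j => σ.SameCycle i j) with hT
  have hTnz : ∀ j ∈ T, x j ≠ 0 := by
    intro j hj
    rw [hT, mem_filter] at hj
    obtain ⟨k, rfl⟩ := hj.2
    exact key k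
  have hmem : ∀ j ∈ T, σ⁻¹ j ∈ T := by
    intro j hj
    rw [hT, mem_filter] at hj ⊢
    exact ⟨mem_univ _, hj.2.trans ⟨-1, by simp⟩⟩
  have hmem' : ∀ j ∈ T, σ j ∈ T := by
    intro j hj
    rw [hT, mem_filter] at hj ⊢
    exact ⟨mem_univ _, hj.2.trans ⟨1, by simp⟩⟩
  have hstab : T.map (σ⁻¹ : Perm (Fin n)).toEmbedding = T := by
    ext j
    simp only [Finset.mem_map, Equiv.coe_toEmbedding]
    constructor
    · rintro ⟨a, ha, rfl⟩; exact hmem a ha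
    · intro hj; exact ⟨σ j, hmem' j hj, by simp⟩
  have hre : ∏ j ∈ T, x (σ⁻¹ j) = ∏ j ∈ T, x j := by
    conv_rhs => rw [← hstab]
    rw [Finset.prod_map]
    rfl
  have hsplit : ∏ j ∈ T, x j = (∏ j ∈ T, ε j) * ∏ j ∈ T, x (σ⁻¹ j) := by
    rw [← Finset.prod_mul_distrib]
    exact Finset.prod_congr rfl fun j _ => hx j
  have hne : ∏ j ∈ T, x j ≠ 0 := Finset.prod_ne_zero_iff.mpr hTnz
  rw [hre] at hsplit
  rw [orbitSignProd_eq]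
  apply mul_right_cancel₀ hne
  rw [← hsplit, one_mul]

lemma exists_fixed_of_prod_one (σ : Perm (Fin n)) (ε : Fin n → ℝ)
    (hε : ∀ i, ε i = 1 ∨ ε i = -1) (i : Fin n)
    (h1 : orbitSignProd σ ε i = 1) :
    ∃ x : Fin n → ℝ, x ≠ 0 ∧ ∀ j, x j = ε j * x (σ⁻¹ j) := by
  classical
  set m := Function.minimalPeriod σ i with hm
  have hmpos : 0 < m := by
    apply Function.minimalPeriod_pos_of_mem_periodicPts
    exact ⟨orderOf σ, orderOf_pos σ, by
      simp [Function.IsPeriodicPt, Function.IsFixedPt, ← Equiv.Perm.coe_pow,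
        pow_orderOf_eq_one]⟩
  have hper : (σ : Fin n → Fin n)^[m] i = i := Function.iterate_minimalPeriod
  have hinj : ∀ k l, k < m → l < m → (σ : Fin n → Fin n)^[k] i = (σ : Fin n → Fin n)^[l] i → k = l := by
    intro k l hk hl h
    exact Function.iterate_injOn_Iio_minimalPeriod (Set.mem_Iio.2 hk) (Set.mem_Iio.2 hl) h
  have horb : Finset.univ.filter (fun j => σ.SameCycle i j)
      = (Finset.range m).image (fun k => (σ : Fin n → Fin n)^[k] i) := by
    ext j
    simp only [Finset.mem_filter, Finset.mem_univ, true_and, Finset.mem_image, Finset.mem_range]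
    constructor
    · intro hj
      obtain ⟨k, hk, rfl⟩ := hj.exists_pow_eq'
      refine ⟨k % m, Nat.mod_lt _ hmpos, ?_⟩
      rw [Function.iterate_mod_minimalPeriod_eq, Equiv.Perm.coe_pow]
    · rintro ⟨k, hk, rfl⟩
      exact ⟨(k : ℤ), by rw [zpow_natCast, Equiv.Perm.coe_pow]⟩
  set g : ℕ → ℝ := fun k => ∏ t ∈ Finset.range k, ε ((σ : Fin n → Fin n)^[t+1] i) with hg
  have hprodT : (∏ k ∈ Finset.range m, ε ((σ : Fin n → Fin n)^[k] i)) = 1 := by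
    rw [orbitSignProd_eq, horb, Finset.prod_image
      (fun k hk l hl h => hinj k l (Finset.mem_range.1 hk) (Finset.mem_range.1 hl) h)] at h1
    exact h1
  have hmsucc : m - 1 + 1 = m := Nat.succ_pred_eq_of_pos hmpos
  have hkey : ε i * g (m - 1) = 1 := by
    rw [← hprodT, ← hmsucc, Finset.prod_range_succ']
    simp [hg, mul_comm]
  let x : Fin n → ℝ := fun j =>
    if h : ∃ k, k < m ∧ (σ : Fin n → Fin n)^[k] i = j then g (Classical.choose h) else 0
  have hxpos : ∀ (j) (h : ∃ k, k < m ∧ (σ : Fin n → Fin n)^[k] i = j),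
      x j = g (Classical.choose h) := fun j h => dif_pos h
  have hxneg : ∀ j, (¬ ∃ k, k < m ∧ (σ : Fin n → Fin n)^[k] i = j) → x j = 0 :=
    fun j h => dif_neg h
  have hxval : ∀ k, k < m → x ((σ : Fin n → Fin n)^[k] i) = g k := by
    intro k hk
    have h : ∃ k', k' < m ∧ (σ : Fin n → Fin n)^[k'] i = (σ : Fin n → Fin n)^[k] i := ⟨k, hk, rfl⟩
    rw [hxpos _ h]
    exact congrArg g (hinj _ _ (Classical.choose_spec h).1 hk (Classical.choose_spec h).2)
  have hxi : x i = 1 := by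
    have := hxval 0 hmpos
    simpa [hg] using this
  refine ⟨x, ?_, ?_⟩
  · intro h0
    have : x i = 0 := congrFun h0 i
    rw [hxi] at this
    norm_num at this
  · intro j
    by_cases h : ∃ k, k < m ∧ (σ : Fin n → Fin n)^[k] i = j
    · obtain ⟨k, hk, rfl⟩ := h
      rcases Nat.eq_zero_or_pos k with rfl | hkpos
      · have hσi : σ⁻¹ ((σ : Fin n → Fin n)^[0] i) = (σ : Fin n → Fin n)^[m-1] i := by
          rw [Function.iterate_zero_apply, Equiv.Perm.inv_eq_iff_eq]
          calc i = (σ : Fin n → Fin n)^[m] i := hper.symm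
          _ = (σ : Fin n → Fin n)^[m-1+1] i := by rw [hmsucc]
          _ = σ ((σ : Fin n → Fin n)^[m-1] i) := Function.iterate_succ_apply' _ _ _
        rw [hσi, hxval _ (Nat.sub_lt hmpos one_pos), Function.iterate_zero_apply, hxi, ← hkey]
      · obtain ⟨k', rfl⟩ := Nat.exists_eq_succ_of_ne_zero hkpos.ne'
        have hσk : σ⁻¹ ((σ : Fin n → Fin n)^[k'+1] i) = (σ : Fin n → Fin n)^[k'] i := by
          rw [Function.iterate_succ_apply', Perm.coe_inv, Equiv.symm_apply_apply]
        rw [hσk, hxval _ hk, hxval _ (Nat.lt_of_succ_lt hk), hg]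
        simp only
        rw [Finset.prod_range_succ, mul_comm]
    · have h' : ¬ ∃ k, k < m ∧ (σ : Fin n → Fin n)^[k] i = σ⁻¹ j := by
        rintro ⟨k, hk, hkj⟩
        apply h
        have h3 : (σ : Fin n → Fin n)^[k+1] i = j := by
          rw [Function.iterate_succ_apply', hkj, Perm.coe_inv, Equiv.apply_symm_apply]
        rcases Nat.lt_or_ge (k+1) m with h2 | h2
        · exact ⟨k+1, h2, h3⟩
        · have hkm : k + 1 = m := le_antisymm hk h2
          refine ⟨0, hmpos, ?_⟩
          rw [Function.iterate_zero_apply]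
          calc i = (σ : Fin n → Fin n)^[m] i := hper.symm
          _ = (σ : Fin n → Fin n)^[k+1] i := by rw [hkm]
          _ = j := h3
      rw [hxneg j h, hxneg _ h', mul_zero]

lemma lemA (σ : Perm (Fin n)) (ε : Fin n → ℝ) (hε : ∀ i, ε i = 1 ∨ ε i = -1) :
    (∀ x : Fin n → ℝ, (∀ i, x i = ε i * x (σ⁻¹ i)) → x = 0) ↔
      ∀ i, orbitSignProd σ ε i = -1 := by
  constructor
  · intro hL i
    rcases orbitSignProd_pm σ ε hε i with h | h
    · exfalso
      obtain ⟨x, hx0, hxf⟩ := exists_fixed_of_prod_one σ ε hε i h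
      exact hx0 (hL x hxf)
    · exact h
  · intro hR x hx
    funext j
    show x j = 0
    by_contra hj
    have := prod_one_of_ne_zero σ ε hε x hx j hj
    rw [hR j] at this
    norm_num at this

lemma neg_one_pow_iff (c : ℕ) : ((-1 : ℝ) ^ c = -1) ↔ Odd c := by
  rcases Nat.even_or_odd c with h | h
  · norm_num [h.neg_one_pow, Nat.not_odd_iff_even.mpr h]
  · simp [h.neg_one_pow, h]

lemma prod_eq_pow (T : Finset (Fin n)) (ε : Fin n → ℝ) (s : Fin n → Bool)
    (hs : ∀ j, ε j = if s j then -1 else 1) :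
    ∏ j ∈ T, ε j = (-1 : ℝ) ^ (T.filter (fun j => s j = true)).card := by
  rw [Finset.prod_congr rfl (fun j _ => hs j), Finset.prod_ite]
  simp

lemma c22_iff (σ : Perm (Fin 4)) :
    σ.cycleType = {2, 2} ↔ σ.support.card = 4 ∧ σ ^ 2 = 1 := by
  constructor
  · intro h
    refine ⟨by rw [← Equiv.Perm.sum_cycleType, h]; rfl, ?_⟩
    have ho : orderOf σ = 2 := by rw [← Equiv.Perm.lcm_cycleType, h]; rfl
    rw [← ho]; exact pow_orderOf_eq_one σ
  · rintro ⟨hcard, hord⟩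
    have hne : σ ≠ 1 := by
      intro h; rw [h] at hcard; simp at hcard
    have ho : orderOf σ = 2 := by
      rcases (Nat.dvd_prime Nat.prime_two).mp (orderOf_dvd_of_pow_eq_one hord) with h | h
      · exact absurd (orderOf_eq_one_iff.mp h) hne
      · exact h
    obtain ⟨k, hk⟩ := Equiv.Perm.cycleType_prime_order (by rw [ho]; exact Nat.prime_two)
    rw [ho] at hk
    have hsum := Equiv.Perm.sum_cycleType σ
    rw [hk, Multiset.sum_replicate, hcard, smul_eq_mul] at hsum
    have : k = 1 := by omega
    rw [hk, this]
    rfl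

set_option maxHeartbeats 2000000 in
lemma keyDecide : ∀ σ : Perm (Fin 4), ∀ s : Fin 4 → Bool,
    Even ((Finset.univ.filter (fun j => s j = true)).card) →
    ((∀ i, Odd (((Finset.univ.filter (fun j => σ.SameCycle i j)).filter
        (fun j => s j = true)).card)) ↔
      ((σ.support.card = 4 ∧ σ ^ 2 = 1) ∧ ∀ i, Odd (((Finset.univ.filter
          (fun j => σ.SameCycle i j)).filter (fun j => s j = true)).card)) ∨
        (σ.support.card = 3 ∧ (∀ i, σ i ≠ i → Odd (((Finset.univ.filter
          (fun j => σ.SameCycle i j)).filter (fun j => s j = true)).card)) ∧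
          (∀ i, σ i = i → s i = true)) ∨
        (σ = 1 ∧ ∀ i, s i = true)) := by decide


/-- An element of the Weyl group of type `D₄`, realized as a signed permutation `(ε, σ)` of
the coordinates of `ℝ⁴` with evenly many sign changes (`∏ ε i = 1`), has no nonzero fixed
vector if and only if one of the following holds:
(i) `σ` has cycle type `{2, 2}` and the product of `ε` over each of the two `σ`-orbits is `−1`;
(ii) `σ` is a 3-cycle, the product of `ε` over its 3-element orbit is `−1`, and `ε` takes the
value `−1` at the fixed point of `σ`;
(iii) `σ` is the identity and `ε i = −1` for all `i`. -/
theorem D4_elliptic_classification (σ : Equiv.Perm (Fin 4)) (ε : Fin 4 → ℝ)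
    (hε : ∀ i, ε i = 1 ∨ ε i = -1) (hprod : ∏ i, ε i = 1) :
    (∀ x : Fin 4 → ℝ, (∀ i, x i = ε i * x (σ⁻¹ i)) → x = 0) ↔
      ((σ.cycleType = {2, 2} ∧ ∀ i, orbitSignProd σ ε i = -1) ∨
        (σ.IsThreeCycle ∧ (∀ i, σ i ≠ i → orbitSignProd σ ε i = -1) ∧
          (∀ i, σ i = i → ε i = -1)) ∨
        (σ = 1 ∧ ∀ i, ε i = -1)) := by
  classical
  set s : Fin 4 → Bool := fun j => decide (ε j = -1) with hsdef
  have hs : ∀ j, ε j = if s j then -1 else 1 := by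
    intro j
    rcases hε j with h | h
    · have : s j = false := by
        rw [hsdef]
        simp only [decide_eq_false_iff_not]
        rw [h]; norm_num
      rw [this, h]; norm_num
    · have : s j = true := by rw [hsdef]; simp [h]
      rw [this, h]; norm_num
  have hεiff : ∀ i, (ε i = -1) ↔ s i = true := by
    intro i
    rw [hs i]
    cases h : s i <;> norm_num
  have hbridge : ∀ i, (orbitSignProd σ ε i = -1 ↔
      Odd (((Finset.univ.filter (fun j => σ.SameCycle i j)).filter
        (fun j => s j = true)).card)) := by
    intro i
    rw [orbitSignProd_eq, prod_eq_pow _ ε s hs, neg_one_pow_iff]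
  have hEven : Even ((Finset.univ.filter (fun j => s j = true)).card) := by
    have h2 := prod_eq_pow (Finset.univ : Finset (Fin 4)) ε s hs
    rw [hprod] at h2
    exact (neg_one_pow_eq_one_iff_even (by norm_num : (-1:ℝ) ≠ 1)).mp h2.symm
  have KD := keyDecide σ s hEven
  rw [lemA σ ε hε, c22_iff, ← card_support_eq_three_iff]
  simp_rw [hbridge, hεiff]
  exact KD
end
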